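/- Let a₁, …, a_N ∈ {0,1}^k and let r be an integer with r > 96 log N. Then there exists a matrix Q ∈ {−1,1}^{r×k} such that for all u, v ∈ [N], (r/2)‖a_u − a_v‖₂² ≤ ‖Q a_u − Q a_v‖₂² ≤ (3r/2)‖a_u − a_v‖₂². -/

import Mathlib

open scoped BigOperators
open Real MeasureTheory Finset

/-- STATEMENT 8 auxiliary development. -/
private lemma JLexp_neg_le {t : ℝ} (ht : 0 ≤ t) : Real.exp (-t) ≤ 1 - t + t ^ 2 / 2 := by
  have key : MonotoneOn (fun t : ℝ => 1 - t + t ^ 2 / 2 - Real.exp (-t)) (Set.Ici 0) := by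
    have hderiv : ∀ x : ℝ, HasDerivAt (fun t : ℝ => 1 - t + t ^ 2 / 2 - Real.exp (-t))
        (-1 + x + Real.exp (-x)) x := by
      intro x
      have h1 : HasDerivAt (fun t : ℝ => Real.exp (-t)) (-Real.exp (-x)) x := by
        exact ((hasDerivAt_neg x).exp).congr_deriv (by ring)
      have h2 : HasDerivAt (fun t : ℝ => 1 - t + t ^ 2 / 2) (-1 + x) x := by
        have := ((hasDerivAt_pow 2 x).div_const 2)
        exact (((hasDerivAt_id' x).const_sub 1).add this).congr_deriv (by norm_num)
      exact (h2.sub h1).congr_deriv (by ring)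
    apply monotoneOn_of_deriv_nonneg (convex_Ici 0)
    · exact (Continuous.continuousOn (by continuity))
    · intro x hx
      exact (hderiv x).differentiableAt.differentiableWithinAt
    · intro x hx
      rw [(hderiv x).deriv]
      have := Real.add_one_le_exp (-x)
      simp only [interior_Ici, Set.mem_Ioi] at hx
      linarith
  have h0 := key (Set.mem_Ici.mpr le_rfl) (Set.mem_Ici.mpr ht) ht
  simp at h0
  linarith

private lemma JLcosh_le (a : ℝ) : Real.exp a + Real.exp (-a) ≤ 2 * Real.exp (a ^ 2 / 2) := by
  have := Real.cosh_le_exp_half_sq a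
  rw [Real.cosh_eq] at this
  linarith

private lemma JLintegrable_exp_shift (t : ℝ) :
    Integrable (fun x : ℝ => Real.exp (t * x - x ^ 2 / 2)) := by
  have h : (fun x : ℝ => Real.exp (t * x - x ^ 2 / 2))
      = fun x => Real.exp (t ^ 2 / 2) * Real.exp (-(1/2) * (x - t) ^ 2) := by
    funext x; rw [← Real.exp_add]; ring_nf
  rw [h]
  exact ((integrable_exp_neg_mul_sq (by norm_num)).comp_sub_right t).const_mul _

private lemma JLintegral_exp_shift (t : ℝ) :
    ∫ x : ℝ, Real.exp (t * x - x ^ 2 / 2) = Real.exp (t ^ 2 / 2) * Real.sqrt (2 * π) := by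
  have h : (fun x : ℝ => Real.exp (t * x - x ^ 2 / 2))
      = fun x => Real.exp (t ^ 2 / 2) * Real.exp (-(1/2) * (x - t) ^ 2) := by
    funext x; rw [← Real.exp_add]; ring_nf
  rw [h, MeasureTheory.integral_const_mul,
    MeasureTheory.integral_sub_right_eq_self (μ := volume) (fun x : ℝ => Real.exp (-(1/2) * x ^ 2)) t,
    integral_gaussian]
  congr 1
  rw [show π / (1/2 : ℝ) = 2 * π by ring]

private def sg (b : Bool) : ℝ := if b then 1 else -1

private lemma sg_sq (b : Bool) : sg b ^ 2 = 1 := by cases b <;> simp [sg]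

private lemma sg_true : sg true = 1 := rfl

private lemma sg_false : sg false = -1 := rfl

private lemma sg_not (b : Bool) : sg (!b) = - sg b := by cases b <;> simp [sg]

private def flipAt {k : ℕ} (j : Fin k) : Equiv.Perm (Fin k → Bool) :=
  Function.Involutive.toPerm (fun σ => Function.update σ j (!σ j)) (by
    intro σ; funext i
    rcases eq_or_ne i j with rfl | h
    · simp
    · simp [Function.update_of_ne h])

private lemma JLsum_pair {k : ℕ} (j : Fin k) (f : (Fin k → Bool) → ℝ) :
    ∑ σ : Fin k → Bool, f σ
      = (∑ σ : Fin k → Bool, (f σ + f (Function.update σ j (!σ j)))) / 2 := by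
  have h := Equiv.sum_comp (flipAt j) f
  rw [Finset.sum_add_distrib]
  have : ∑ σ : Fin k → Bool, f ((flipAt j) σ) = ∑ σ : Fin k → Bool, f (Function.update σ j (!σ j)) := rfl
  linarith [h, this]

private lemma JLmoments (k : ℕ) (d : Fin k → ℝ) (T : Finset (Fin k)) :
    (∑ σ : Fin k → Bool, (∑ i ∈ T, sg (σ i) * d i) ^ 2 = (2:ℝ) ^ k * ∑ i ∈ T, d i ^ 2)
    ∧ (∑ σ : Fin k → Bool, (∑ i ∈ T, sg (σ i) * d i) ^ 4
        ≤ 3 * (2:ℝ) ^ k * (∑ i ∈ T, d i ^ 2) ^ 2) := by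
  classical
  induction T using Finset.induction_on with
  | empty =>
      simp [Finset.sum_const, Finset.card_univ]
  | @insert j T hj ih =>
      obtain ⟨ih2, ih4⟩ := ih
      have hA : ∀ σ : Fin k → Bool,
          (∑ i ∈ T, sg (Function.update σ j (!σ j) i) * d i) = ∑ i ∈ T, sg (σ i) * d i := by
        intro σ
        apply Finset.sum_congr rfl
        intro i hi
        have : i ≠ j := by rintro rfl; exact hj hi
        rw [Function.update_of_ne this]
      have hY : ∀ σ : Fin k → Bool,
          (∑ i ∈ insert j T, sg (σ i) * d i) = (∑ i ∈ T, sg (σ i) * d i) + sg (σ j) * d j := by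
        intro σ; rw [Finset.sum_insert hj]; ring
      have hYf : ∀ σ : Fin k → Bool,
          (∑ i ∈ insert j T, sg (Function.update σ j (!σ j) i) * d i)
            = (∑ i ∈ T, sg (σ i) * d i) - sg (σ j) * d j := by
        intro σ
        rw [Finset.sum_insert hj, hA σ, Function.update_self, sg_not]
        ring
      have hcard : (Finset.univ : Finset (Fin k → Bool)).card = 2 ^ k := by
        simp [Finset.card_univ]
      constructor
      · rw [JLsum_pair j (fun σ => (∑ i ∈ insert j T, sg (σ i) * d i) ^ 2)]
        have : ∀ σ : Fin k → Bool,
            (∑ i ∈ insert j T, sg (σ i) * d i) ^ 2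
              + (∑ i ∈ insert j T, sg (Function.update σ j (!σ j) i) * d i) ^ 2
            = 2 * (∑ i ∈ T, sg (σ i) * d i) ^ 2 + 2 * d j ^ 2 := by
          intro σ
          rw [hY σ, hYf σ]
          have hb := sg_sq (σ j)
          nlinarith [hb]
        rw [Finset.sum_congr rfl (fun σ _ => this σ), Finset.sum_add_distrib,
          ← Finset.mul_sum, ih2, Finset.sum_const, hcard, Finset.sum_insert hj]
        push_cast
        ring
      · rw [JLsum_pair j (fun σ => (∑ i ∈ insert j T, sg (σ i) * d i) ^ 4)]
        have : ∀ σ : Fin k → Bool,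
            (∑ i ∈ insert j T, sg (σ i) * d i) ^ 4
              + (∑ i ∈ insert j T, sg (Function.update σ j (!σ j) i) * d i) ^ 4
            = 2 * (∑ i ∈ T, sg (σ i) * d i) ^ 4
              + 12 * (∑ i ∈ T, sg (σ i) * d i) ^ 2 * d j ^ 2 + 2 * d j ^ 4 := by
          intro σ
          rw [hY σ, hYf σ]
          have hb := sg_sq (σ j)
          linear_combination (12 * (∑ i ∈ T, sg (σ i) * d i) ^ 2 * d j ^ 2
            + 2 * d j ^ 4 * (sg (σ j) ^ 2 + 1)) * hb
        rw [Finset.sum_congr rfl (fun σ _ => this σ)]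
        rw [Finset.sum_add_distrib, Finset.sum_add_distrib, ← Finset.mul_sum, ← Finset.mul_sum]
        have h12 : ∑ σ : Fin k → Bool, 12 * (∑ i ∈ T, sg (σ i) * d i) ^ 2 * d j ^ 2
            = 12 * d j ^ 2 * ((2:ℝ) ^ k * ∑ i ∈ T, d i ^ 2) := by
          rw [← ih2, Finset.mul_sum]
          apply Finset.sum_congr rfl
          intro σ _; ring
        have hconst : ∑ _σ : Fin k → Bool, d j ^ 4 = (2:ℝ) ^ k * d j ^ 4 := by
          rw [Finset.sum_const, hcard]; push_cast; ring
        rw [h12, hconst, Finset.sum_insert hj]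
        have h2k : (0:ℝ) ≤ 2 ^ k := by positivity
        nlinarith [ih4, h2k, sq_nonneg (d j ^ 2), mul_nonneg h2k (sq_nonneg (d j ^ 2))]
      

private lemma JLsum_prod_bool (k : ℕ) (h : Fin k → Bool → ℝ) :
    ∑ σ : Fin k → Bool, ∏ i, h i (σ i) = ∏ i, (h i true + h i false) := by
  classical
  rw [← Fintype.prod_sum]
  exact Finset.prod_congr rfl (fun i _ => by rw [Fintype.sum_bool])

private lemma JLrow_upper (k : ℕ) (d : Fin k → ℝ) {S : ℝ} (hS : 0 < S)
    (hSd : S = ∑ i, d i ^ 2) :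
    ∑ σ : Fin k → Bool, Real.exp ((∑ i, sg (σ i) * d i) ^ 2 / (8 * S))
      ≤ (2:ℝ) ^ k * Real.exp (5/32) := by
  classical
  set s : ℝ := Real.sqrt (1 / (4 * S)) with hs_def
  have hs2 : s ^ 2 = 1 / (4 * S) := Real.sq_sqrt (by positivity)
  have hsqrtpos : (0:ℝ) < Real.sqrt (2 * π) := Real.sqrt_pos.mpr (by positivity)
  -- step 1: pointwise representation
  have hrep : ∀ y : ℝ, Real.exp (y ^ 2 / (8 * S))
      = (Real.sqrt (2 * π))⁻¹ * ∫ x : ℝ, Real.exp ((s * y) * x - x ^ 2 / 2) := by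
    intro y
    rw [JLintegral_exp_shift (s * y)]
    have : (s * y) ^ 2 / 2 = y ^ 2 / (8 * S) := by
      rw [mul_pow, hs2, div_mul_eq_mul_div, one_mul, div_div]
      congr 1
      ring
    rw [this, mul_comm (Real.exp (y ^ 2 / (8 * S))) (Real.sqrt (2 * π)),
      inv_mul_cancel_left₀ hsqrtpos.ne']
  -- step 2: swap sum and integral
  have hswap : ∑ σ : Fin k → Bool, Real.exp ((∑ i, sg (σ i) * d i) ^ 2 / (8 * S))
      = (Real.sqrt (2 * π))⁻¹ *
        ∫ x : ℝ, ∑ σ : Fin k → Bool, Real.exp ((s * (∑ i, sg (σ i) * d i)) * x - x ^ 2 / 2) := by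
    rw [MeasureTheory.integral_finset_sum _
      (fun σ _ => JLintegrable_exp_shift (s * (∑ i, sg (σ i) * d i)))]
    rw [Finset.mul_sum]
    exact Finset.sum_congr rfl (fun σ _ => hrep _)
  rw [hswap]
  -- step 3: pointwise product formula
  have hprod : ∀ x : ℝ, ∑ σ : Fin k → Bool, Real.exp ((s * (∑ i, sg (σ i) * d i)) * x - x ^ 2 / 2)
      = (∏ i, (Real.exp (s * x * d i) + Real.exp (-(s * x * d i)))) * Real.exp (-(x ^ 2) / 2) := by
    intro x
    have : ∀ σ : Fin k → Bool, Real.exp ((s * (∑ i, sg (σ i) * d i)) * x - x ^ 2 / 2)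
        = (∏ i, Real.exp (sg (σ i) * (s * x * d i))) * Real.exp (-(x ^ 2) / 2) := by
      intro σ
      rw [← Real.exp_sum, ← Real.exp_add]
      congr 1
      rw [Finset.mul_sum, Finset.sum_mul]
      rw [show -(x^2)/2 = -(x^2/2) by ring, ← sub_eq_add_neg]
      congr 1
      exact Finset.sum_congr rfl (fun i _ => by ring)
    rw [Finset.sum_congr rfl (fun σ _ => this σ), ← Finset.sum_mul]
    congr 1
    rw [JLsum_prod_bool k (fun i b => Real.exp (sg b * (s * x * d i)))]
    exact Finset.prod_congr rfl (fun i _ => by rw [sg_true, sg_false]; ring_nf)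
  rw [MeasureTheory.integral_congr_ae (Filter.Eventually.of_forall hprod)]
  -- step 4: bound the integrand
  have hintL : Integrable (fun x : ℝ =>
      (∏ i, (Real.exp (s * x * d i) + Real.exp (-(s * x * d i)))) * Real.exp (-(x ^ 2) / 2)) := by
    have := MeasureTheory.integrable_finset_sum (Finset.univ : Finset (Fin k → Bool))
      (fun σ _ => JLintegrable_exp_shift (s * (∑ i, sg (σ i) * d i)))
    exact this.congr (Filter.Eventually.of_forall (fun x => (hprod x)))
  have hintR : Integrable (fun x : ℝ => (2:ℝ) ^ k * Real.exp (-(3/8) * x ^ 2)) :=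
    (integrable_exp_neg_mul_sq (by norm_num)).const_mul _
  have hmono : ∀ x : ℝ,
      (∏ i, (Real.exp (s * x * d i) + Real.exp (-(s * x * d i)))) * Real.exp (-(x ^ 2) / 2)
        ≤ (2:ℝ) ^ k * Real.exp (-(3/8) * x ^ 2) := by
    intro x
    have h1 : (∏ i, (Real.exp (s * x * d i) + Real.exp (-(s * x * d i))))
        ≤ ∏ i : Fin k, 2 * Real.exp ((s * x * d i) ^ 2 / 2) := by
      apply Finset.prod_le_prod
      · intro i _; positivity
      · intro i _; exact JLcosh_le _
    have h2 : ∏ i : Fin k, 2 * Real.exp ((s * x * d i) ^ 2 / 2)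
        = (2:ℝ) ^ k * Real.exp (x ^ 2 / 8) := by
      rw [Finset.prod_mul_distrib, Finset.prod_const, ← Real.exp_sum]
      congr 2
      · simp
      have : ∑ i : Fin k, (s * x * d i) ^ 2 / 2 = (s ^ 2 * x ^ 2 / 2) * ∑ i, d i ^ 2 := by
        rw [Finset.mul_sum]; exact Finset.sum_congr rfl (fun i _ => by ring)
      rw [this, ← hSd, hs2]
      field_simp
      ring
    calc (∏ i, (Real.exp (s * x * d i) + Real.exp (-(s * x * d i)))) * Real.exp (-(x ^ 2) / 2)
        ≤ ((2:ℝ) ^ k * Real.exp (x ^ 2 / 8)) * Real.exp (-(x ^ 2) / 2) := by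
          apply mul_le_mul_of_nonneg_right _ (Real.exp_nonneg _)
          rw [← h2]; exact h1
      _ = (2:ℝ) ^ k * Real.exp (-(3/8) * x ^ 2) := by
          rw [mul_assoc, ← Real.exp_add]; congr 2; ring
  have hle := MeasureTheory.integral_mono hintL hintR hmono
  calc (Real.sqrt (2 * π))⁻¹ * ∫ x : ℝ,
        (∏ i, (Real.exp (s * x * d i) + Real.exp (-(s * x * d i)))) * Real.exp (-(x ^ 2) / 2)
      ≤ (Real.sqrt (2 * π))⁻¹ * ∫ x : ℝ, (2:ℝ) ^ k * Real.exp (-(3/8) * x ^ 2) := by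
        apply mul_le_mul_of_nonneg_left hle (by positivity)
    _ = (Real.sqrt (2 * π))⁻¹ * ((2:ℝ) ^ k * Real.sqrt (π / (3/8))) := by
        rw [MeasureTheory.integral_const_mul, integral_gaussian]
    _ = (2:ℝ) ^ k * (Real.sqrt (π / (3/8)) / Real.sqrt (2 * π)) := by
        field_simp
    _ ≤ (2:ℝ) ^ k * Real.exp (5/32) := by
        apply mul_le_mul_of_nonneg_left _ (by positivity)
        rw [div_le_iff₀ hsqrtpos]
        have hexp : (37/32 : ℝ) ≤ Real.exp (5/32) := by
          have := Real.add_one_le_exp (5/32 : ℝ); linarith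
        have hpi : (0:ℝ) < π := Real.pi_pos
        have key : π / (3/8) ≤ (Real.exp (5/32)) ^ 2 * (2 * π) := by
          have h2 : (4/3 : ℝ) ≤ Real.exp (5/32) ^ 2 := by
            nlinarith [hexp, Real.exp_pos (5/32 : ℝ)]
          have : π / (3/8) = (4/3) * (2 * π) := by ring
          rw [this]
          nlinarith
        calc Real.sqrt (π / (3/8)) ≤ Real.sqrt ((Real.exp (5/32)) ^ 2 * (2 * π)) :=
              Real.sqrt_le_sqrt key
          _ = Real.exp (5/32) * Real.sqrt (2 * π) := by
              rw [Real.sqrt_mul (by positivity) _, Real.sqrt_sq (Real.exp_nonneg _)]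

private lemma JLrow_lower (k : ℕ) (d : Fin k → ℝ) {S : ℝ} (hS : 0 < S)
    (hSd : S = ∑ i, d i ^ 2) :
    ∑ σ : Fin k → Bool, Real.exp (-((∑ i, sg (σ i) * d i) ^ 2 / (8 * S)))
      ≤ (2:ℝ) ^ k * Real.exp (-(3/32)) := by
  classical
  obtain ⟨h2, h4⟩ := JLmoments k d Finset.univ
  have hcard : ((Finset.univ : Finset (Fin k → Bool)).card : ℝ) = 2 ^ k := by
    simp [Finset.card_univ]
  have step1 : ∑ σ : Fin k → Bool, Real.exp (-((∑ i, sg (σ i) * d i) ^ 2 / (8 * S)))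
      ≤ ∑ σ : Fin k → Bool, (1 - (∑ i, sg (σ i) * d i) ^ 2 / (8 * S)
          + ((∑ i, sg (σ i) * d i) ^ 2 / (8 * S)) ^ 2 / 2) := by
    apply Finset.sum_le_sum
    intro σ _
    exact JLexp_neg_le (by positivity)
  have step2 : ∑ σ : Fin k → Bool, (1 - (∑ i, sg (σ i) * d i) ^ 2 / (8 * S)
          + ((∑ i, sg (σ i) * d i) ^ 2 / (8 * S)) ^ 2 / 2)
      ≤ (2:ℝ) ^ k * (115 / 128) := by
    have e1 : ∑ σ : Fin k → Bool, (1 - (∑ i, sg (σ i) * d i) ^ 2 / (8 * S)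
          + ((∑ i, sg (σ i) * d i) ^ 2 / (8 * S)) ^ 2 / 2)
        = (2:ℝ) ^ k - (∑ σ : Fin k → Bool, (∑ i, sg (σ i) * d i) ^ 2) / (8 * S)
          + (∑ σ : Fin k → Bool, (∑ i, sg (σ i) * d i) ^ 4) / (2 * (8 * S) ^ 2) := by
      have e2 : ∑ σ : Fin k → Bool, (∑ i, sg (σ i) * d i) ^ 2 / (8 * S)
          = (∑ σ : Fin k → Bool, (∑ i, sg (σ i) * d i) ^ 2) / (8 * S) :=
        (Finset.sum_div _ _ _).symm
      have e3 : ∑ σ : Fin k → Bool, ((∑ i, sg (σ i) * d i) ^ 2 / (8 * S)) ^ 2 / 2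
          = (∑ σ : Fin k → Bool, (∑ i, sg (σ i) * d i) ^ 4) / (2 * (8 * S) ^ 2) := by
        rw [Finset.sum_div]
        apply Finset.sum_congr rfl
        intro σ _
        rw [div_pow, ← pow_mul]
        norm_num
        rw [div_div]
        congr 1
        ring
      rw [Finset.sum_add_distrib, Finset.sum_sub_distrib, Finset.sum_const, nsmul_eq_mul,
        mul_one, hcard, e2, e3]
    rw [e1, h2]
    have hSu : ∑ i ∈ Finset.univ, d i ^ 2 = S := hSd.symm
    rw [hSu]
    have hden : (0:ℝ) < 2 * (8 * S) ^ 2 := by positivity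
    have h4' := h4
    rw [hSu] at h4'
    have hb : (∑ σ : Fin k → Bool, (∑ i, sg (σ i) * d i) ^ 4) / (2 * (8 * S) ^ 2)
        ≤ (3 * (2:ℝ) ^ k * S ^ 2) / (2 * (8 * S) ^ 2) := by gcongr
    have hq1 : ((2:ℝ) ^ k * S) / (8 * S) = (2:ℝ) ^ k / 8 := by
      rw [div_eq_div_iff (by positivity) (by norm_num : (8:ℝ) ≠ 0)]
      ring
    have hq2 : (3 * (2:ℝ) ^ k * S ^ 2) / (2 * (8 * S) ^ 2) = 3 * (2:ℝ) ^ k / 128 := by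
      rw [div_eq_div_iff (by positivity) (by norm_num : (128:ℝ) ≠ 0)]
      ring
    rw [hq1]
    rw [hq2] at hb
    linarith
  calc ∑ σ : Fin k → Bool, Real.exp (-((∑ i, sg (σ i) * d i) ^ 2 / (8 * S)))
      ≤ (2:ℝ) ^ k * (115 / 128) := le_trans step1 step2
    _ ≤ (2:ℝ) ^ k * Real.exp (-(3/32)) := by
        apply mul_le_mul_of_nonneg_left _ (by positivity)
        have := Real.add_one_le_exp (-(3/32) : ℝ)
        linarith

private lemma JLcard_le {Ω : Type*} [Fintype Ω] (g : Ω → ℝ) (p : Ω → Prop) [DecidablePred p]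
    (hp : ∀ ω, p ω → 0 ≤ g ω) :
    (((Finset.univ : Finset Ω).filter p).card : ℝ) ≤ ∑ ω : Ω, Real.exp (g ω) := by
  calc (((Finset.univ : Finset Ω).filter p).card : ℝ)
      = ∑ _ω ∈ (Finset.univ : Finset Ω).filter p, (1:ℝ) := by
        rw [Finset.sum_const, nsmul_eq_mul, mul_one]
    _ ≤ ∑ ω ∈ (Finset.univ : Finset Ω).filter p, Real.exp (g ω) := by
        apply Finset.sum_le_sum
        intro ω hω
        rw [Finset.mem_filter] at hω
        exact Real.one_le_exp (hp ω hω.2)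
    _ ≤ ∑ ω : Ω, Real.exp (g ω) :=
        Finset.sum_le_sum_of_subset_of_nonneg (Finset.filter_subset _ _)
          (fun ω _ _ => Real.exp_nonneg _)

private lemma JLpair (k r : ℕ) (d : Fin k → ℝ) :
    (((Finset.univ : Finset (Fin r → Fin k → Bool)).filter (fun ω =>
        ¬((r:ℝ)/2 * (∑ i, d i ^ 2) ≤ ∑ l, (∑ i, sg (ω l i) * d i) ^ 2 ∧
          ∑ l, (∑ i, sg (ω l i) * d i) ^ 2 ≤ 3 * (r:ℝ)/2 * ∑ i, d i ^ 2))).card : ℝ)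
      ≤ 2 * Real.exp (-(r:ℝ)/32) * ((2:ℝ) ^ k) ^ r := by
  classical
  set S : ℝ := ∑ i, d i ^ 2 with hSd
  have hS0 : 0 ≤ S := by positivity
  rcases eq_or_lt_of_le hS0 with h0 | hS
  · -- S = 0 : all d i = 0, condition always satisfied
    have hd0 : ∀ i, d i = 0 := by
      intro i
      have := (Finset.sum_eq_zero_iff_of_nonneg
        (fun j _ => sq_nonneg (d j))).mp h0.symm i (Finset.mem_univ i)
      exact pow_eq_zero_iff (by norm_num) |>.mp this
    have hfilter : ((Finset.univ : Finset (Fin r → Fin k → Bool)).filter (fun ω =>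
        ¬((r:ℝ)/2 * (∑ i, d i ^ 2) ≤ ∑ l, (∑ i, sg (ω l i) * d i) ^ 2 ∧
          ∑ l, (∑ i, sg (ω l i) * d i) ^ 2 ≤ 3 * (r:ℝ)/2 * ∑ i, d i ^ 2))) = ∅ := by
      apply Finset.filter_false_of_mem
      intro ω _
      have hY : ∀ l, (∑ i, sg (ω l i) * d i) = 0 := by
        intro l
        apply Finset.sum_eq_zero
        intro i _
        rw [hd0 i, mul_zero]
      have hF : ∑ l, (∑ i, sg (ω l i) * d i) ^ 2 = 0 := by
        apply Finset.sum_eq_zero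
        intro l _
        rw [hY l]
        norm_num
      have hSz : (∑ i, d i ^ 2) = 0 := h0.symm
      rw [not_not, hF, hSz]
      norm_num
    rw [hfilter]
    simp only [Finset.card_empty, Nat.cast_zero]
    positivity
  · -- S > 0
    set F : (Fin r → Fin k → Bool) → ℝ := fun ω => ∑ l, (∑ i, sg (ω l i) * d i) ^ 2 with hF
    have hsub : ((Finset.univ : Finset (Fin r → Fin k → Bool)).filter (fun ω =>
        ¬((r:ℝ)/2 * S ≤ F ω ∧ F ω ≤ 3 * (r:ℝ)/2 * S)))
        ⊆ ((Finset.univ : Finset (Fin r → Fin k → Bool)).filter (fun ω => 3 * (r:ℝ)/2 * S ≤ F ω))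
          ∪ ((Finset.univ : Finset (Fin r → Fin k → Bool)).filter (fun ω => F ω ≤ (r:ℝ)/2 * S)) := by
      intro ω hω
      rw [Finset.mem_filter, not_and_or] at hω
      rw [Finset.mem_union, Finset.mem_filter, Finset.mem_filter]
      rcases hω.2 with h | h
      · exact Or.inr ⟨Finset.mem_univ ω, le_of_not_ge h⟩
      · exact Or.inl ⟨Finset.mem_univ ω, le_of_not_ge h⟩
    have hU : ((((Finset.univ : Finset (Fin r → Fin k → Bool)).filter
        (fun ω => 3 * (r:ℝ)/2 * S ≤ F ω)).card : ℝ))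
        ≤ Real.exp (-(r:ℝ)/32) * ((2:ℝ) ^ k) ^ r := by
      have hcard := JLcard_le (fun ω => (F ω - 3 * (r:ℝ)/2 * S) / (8 * S))
        (fun ω => 3 * (r:ℝ)/2 * S ≤ F ω)
        (fun ω hω => div_nonneg (by linarith) (by positivity))
      refine le_trans hcard ?_
      have heq : ∀ ω : Fin r → Fin k → Bool,
          Real.exp ((F ω - 3 * (r:ℝ)/2 * S) / (8 * S))
            = Real.exp (-(3 * (r:ℝ)/16)) * ∏ l, Real.exp ((∑ i, sg (ω l i) * d i) ^ 2 / (8 * S)) := by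
        intro ω
        rw [← Real.exp_sum, ← Real.exp_add]
        congr 1
        have : (F ω - 3 * (r:ℝ)/2 * S) / (8 * S) = F ω / (8 * S) - (3 * (r:ℝ)/2 * S) / (8 * S) :=
          sub_div _ _ _
        rw [this, hF]
        have h1 : (3 * (r:ℝ)/2 * S) / (8 * S) = 3 * (r:ℝ)/16 := by
          rw [div_eq_div_iff (by positivity) (by norm_num : (16:ℝ) ≠ 0)]
          ring
        rw [h1, Finset.sum_div]
        ring
      rw [Finset.sum_congr rfl (fun ω _ => heq ω), ← Finset.mul_sum]
      rw [← Fintype.sum_pow (fun σ : Fin k → Bool => Real.exp ((∑ i, sg (σ i) * d i) ^ 2 / (8 * S))) r]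
      calc Real.exp (-(3 * (r:ℝ)/16)) *
            (∑ σ : Fin k → Bool, Real.exp ((∑ i, sg (σ i) * d i) ^ 2 / (8 * S))) ^ r
          ≤ Real.exp (-(3 * (r:ℝ)/16)) * ((2:ℝ) ^ k * Real.exp (5/32)) ^ r := by
            apply mul_le_mul_of_nonneg_left _ (Real.exp_nonneg _)
            exact pow_le_pow_left₀ (Finset.sum_nonneg (fun σ _ => Real.exp_nonneg _))
              (JLrow_upper k d hS hSd) r
        _ = Real.exp (-(r:ℝ)/32) * ((2:ℝ) ^ k) ^ r := by
            rw [mul_pow, ← Real.exp_nat_mul, mul_left_comm, ← Real.exp_add,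
              mul_comm (((2:ℝ) ^ k) ^ r)]
            congr 1
            push_cast
            ring
    have hL : ((((Finset.univ : Finset (Fin r → Fin k → Bool)).filter
        (fun ω => F ω ≤ (r:ℝ)/2 * S)).card : ℝ))
        ≤ Real.exp (-(r:ℝ)/32) * ((2:ℝ) ^ k) ^ r := by
      have hcard := JLcard_le (fun ω => ((r:ℝ)/2 * S - F ω) / (8 * S))
        (fun ω => F ω ≤ (r:ℝ)/2 * S)
        (fun ω hω => div_nonneg (by linarith) (by positivity))
      refine le_trans hcard ?_
      have heq : ∀ ω : Fin r → Fin k → Bool,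
          Real.exp (((r:ℝ)/2 * S - F ω) / (8 * S))
            = Real.exp ((r:ℝ)/16) * ∏ l, Real.exp (-((∑ i, sg (ω l i) * d i) ^ 2 / (8 * S))) := by
        intro ω
        rw [← Real.exp_sum, ← Real.exp_add]
        congr 1
        have : ((r:ℝ)/2 * S - F ω) / (8 * S) = ((r:ℝ)/2 * S) / (8 * S) - F ω / (8 * S) :=
          sub_div _ _ _
        rw [this, hF]
        have h1 : ((r:ℝ)/2 * S) / (8 * S) = (r:ℝ)/16 := by
          rw [div_eq_div_iff (by positivity) (by norm_num : (16:ℝ) ≠ 0)]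
          ring
        rw [h1, Finset.sum_div, sub_eq_add_neg, ← Finset.sum_neg_distrib]
      rw [Finset.sum_congr rfl (fun ω _ => heq ω), ← Finset.mul_sum]
      rw [← Fintype.sum_pow (fun σ : Fin k → Bool =>
        Real.exp (-((∑ i, sg (σ i) * d i) ^ 2 / (8 * S)))) r]
      calc Real.exp ((r:ℝ)/16) *
            (∑ σ : Fin k → Bool, Real.exp (-((∑ i, sg (σ i) * d i) ^ 2 / (8 * S)))) ^ r
          ≤ Real.exp ((r:ℝ)/16) * ((2:ℝ) ^ k * Real.exp (-(3/32))) ^ r := by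
            apply mul_le_mul_of_nonneg_left _ (Real.exp_nonneg _)
            exact pow_le_pow_left₀ (Finset.sum_nonneg (fun σ _ => Real.exp_nonneg _))
              (JLrow_lower k d hS hSd) r
        _ = Real.exp (-(r:ℝ)/32) * ((2:ℝ) ^ k) ^ r := by
            rw [mul_pow, ← Real.exp_nat_mul, mul_left_comm, ← Real.exp_add,
              mul_comm (((2:ℝ) ^ k) ^ r)]
            congr 1
            push_cast
            ring
    calc (((Finset.univ : Finset (Fin r → Fin k → Bool)).filter (fun ω =>
          ¬((r:ℝ)/2 * (∑ i, d i ^ 2) ≤ ∑ l, (∑ i, sg (ω l i) * d i) ^ 2 ∧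
            ∑ l, (∑ i, sg (ω l i) * d i) ^ 2 ≤ 3 * (r:ℝ)/2 * ∑ i, d i ^ 2))).card : ℝ)
        ≤ ((((Finset.univ : Finset (Fin r → Fin k → Bool)).filter (fun ω => 3 * (r:ℝ)/2 * S ≤ F ω))
            ∪ ((Finset.univ : Finset (Fin r → Fin k → Bool)).filter (fun ω => F ω ≤ (r:ℝ)/2 * S))).card : ℝ) := by
          exact_mod_cast Nat.cast_le.mpr (Finset.card_le_card hsub)
      _ ≤ ((((Finset.univ : Finset (Fin r → Fin k → Bool)).filter (fun ω => 3 * (r:ℝ)/2 * S ≤ F ω)).card : ℝ)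
            + (((Finset.univ : Finset (Fin r → Fin k → Bool)).filter (fun ω => F ω ≤ (r:ℝ)/2 * S)).card : ℝ)) := by
          exact_mod_cast Nat.cast_le.mpr (Finset.card_union_le _ _)
      _ ≤ 2 * Real.exp (-(r:ℝ)/32) * ((2:ℝ) ^ k) ^ r := by
          linarith [hU, hL]

/-- Johnson–Lindenstrauss with Rademacher entries: for binary vectors
`a₁, …, a_N ∈ {0,1}^k` and `r > 96 log N`, there is `Q ∈ {−1,1}^{r×k}` preserving all
pairwise squared distances up to factors `r/2` and `3r/2`. -/
theorem exists_rademacher_JL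
    (N k r : ℕ) (a : Fin N → Fin k → ℝ)
    (ha : ∀ u i, a u i = 0 ∨ a u i = 1)
    (hr : 96 * Real.log N < (r : ℝ)) :
    ∃ Q : Matrix (Fin r) (Fin k) ℝ,
      (∀ i j, Q i j = 1 ∨ Q i j = -1) ∧
      ∀ u v : Fin N,
        (r : ℝ) / 2 * ∑ i, (a u i - a v i) ^ 2 ≤
            ∑ l, (Q.mulVec (a u) l - Q.mulVec (a v) l) ^ 2 ∧
        ∑ l, (Q.mulVec (a u) l - Q.mulVec (a v) l) ^ 2 ≤
            3 * (r : ℝ) / 2 * ∑ i, (a u i - a v i) ^ 2 := by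
  classical
  rcases Nat.lt_or_ge N 2 with hN | hN
  · -- trivial cases N = 0, 1
    refine ⟨fun _ _ => 1, fun i j => Or.inl rfl, ?_⟩
    intro u v
    interval_cases N
    · exact u.elim0
    · have huv : u = v := Subsingleton.elim u v
      subst huv
      simp
  · -- N ≥ 2
    have hN0 : (0:ℝ) < (N:ℝ) := by
      have : (0:ℕ) < N := by omega
      exact_mod_cast this
    have key : ∃ ω : Fin r → Fin k → Bool, ∀ u v : Fin N,
        ((r:ℝ)/2 * (∑ i, (fun i => a u i - a v i) i ^ 2)
            ≤ ∑ l, (∑ i, sg (ω l i) * (fun i => a u i - a v i) i) ^ 2 ∧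
          ∑ l, (∑ i, sg (ω l i) * (fun i => a u i - a v i) i) ^ 2
            ≤ 3 * (r:ℝ)/2 * ∑ i, (fun i => a u i - a v i) i ^ 2) := by
      by_contra hcon
      push_neg at hcon
      -- cover univ by bad sets
      have hcover : (Finset.univ : Finset (Fin r → Fin k → Bool)) ⊆
          Finset.biUnion (Finset.univ : Finset (Fin N × Fin N)) (fun p =>
            (Finset.univ : Finset (Fin r → Fin k → Bool)).filter (fun ω =>
              ¬((r:ℝ)/2 * (∑ i, (fun i => a p.1 i - a p.2 i) i ^ 2)
                  ≤ ∑ l, (∑ i, sg (ω l i) * (fun i => a p.1 i - a p.2 i) i) ^ 2 ∧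
                ∑ l, (∑ i, sg (ω l i) * (fun i => a p.1 i - a p.2 i) i) ^ 2
                  ≤ 3 * (r:ℝ)/2 * ∑ i, (fun i => a p.1 i - a p.2 i) i ^ 2))) := by
        intro ω _
        obtain ⟨u, v, huv⟩ := hcon ω
        refine Finset.mem_biUnion.mpr ⟨(u, v), Finset.mem_univ _, Finset.mem_filter.mpr
          ⟨Finset.mem_univ _, ?_⟩⟩
        exact fun hAB => (not_le.mpr (huv hAB.1)) hAB.2
      have hcardΩ : ((Finset.univ : Finset (Fin r → Fin k → Bool)).card : ℝ)
          = ((2:ℝ) ^ k) ^ r := by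
        rw [Finset.card_univ]
        simp only [Fintype.card_fun, Fintype.card_bool, Fintype.card_fin]
        push_cast
        ring
      have hle1 : ((Finset.univ : Finset (Fin r → Fin k → Bool)).card : ℝ)
          ≤ ∑ p : Fin N × Fin N, (((Finset.univ : Finset (Fin r → Fin k → Bool)).filter (fun ω =>
              ¬((r:ℝ)/2 * (∑ i, (fun i => a p.1 i - a p.2 i) i ^ 2)
                  ≤ ∑ l, (∑ i, sg (ω l i) * (fun i => a p.1 i - a p.2 i) i) ^ 2 ∧
                ∑ l, (∑ i, sg (ω l i) * (fun i => a p.1 i - a p.2 i) i) ^ 2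
                  ≤ 3 * (r:ℝ)/2 * ∑ i, (fun i => a p.1 i - a p.2 i) i ^ 2))).card : ℝ) := by
        have h1 := Finset.card_le_card hcover
        have h2 := Finset.card_biUnion_le (s := (Finset.univ : Finset (Fin N × Fin N)))
          (t := fun p => (Finset.univ : Finset (Fin r → Fin k → Bool)).filter (fun ω =>
              ¬((r:ℝ)/2 * (∑ i, (fun i => a p.1 i - a p.2 i) i ^ 2)
                  ≤ ∑ l, (∑ i, sg (ω l i) * (fun i => a p.1 i - a p.2 i) i) ^ 2 ∧
                ∑ l, (∑ i, sg (ω l i) * (fun i => a p.1 i - a p.2 i) i) ^ 2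
                  ≤ 3 * (r:ℝ)/2 * ∑ i, (fun i => a p.1 i - a p.2 i) i ^ 2)))
        have := le_trans h1 h2
        calc ((Finset.univ : Finset (Fin r → Fin k → Bool)).card : ℝ)
            ≤ ((∑ p : Fin N × Fin N, ((Finset.univ : Finset (Fin r → Fin k → Bool)).filter (fun ω =>
              ¬((r:ℝ)/2 * (∑ i, (fun i => a p.1 i - a p.2 i) i ^ 2)
                  ≤ ∑ l, (∑ i, sg (ω l i) * (fun i => a p.1 i - a p.2 i) i) ^ 2 ∧
                ∑ l, (∑ i, sg (ω l i) * (fun i => a p.1 i - a p.2 i) i) ^ 2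
                  ≤ 3 * (r:ℝ)/2 * ∑ i, (fun i => a p.1 i - a p.2 i) i ^ 2))).card : ℕ) : ℝ) := by
              exact_mod_cast this
          _ = _ := by push_cast; ring
      have hle2 : ((Finset.univ : Finset (Fin r → Fin k → Bool)).card : ℝ)
          ≤ (N:ℝ) * (N:ℝ) * (2 * Real.exp (-(r:ℝ)/32) * ((2:ℝ) ^ k) ^ r) := by
        refine le_trans hle1 ?_
        calc (∑ p : Fin N × Fin N, _ : ℝ)
            ≤ ∑ _p : Fin N × Fin N, 2 * Real.exp (-(r:ℝ)/32) * ((2:ℝ) ^ k) ^ r :=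
              Finset.sum_le_sum (fun p _ => JLpair k r (fun i => a p.1 i - a p.2 i))
          _ = (N:ℝ) * (N:ℝ) * (2 * Real.exp (-(r:ℝ)/32) * ((2:ℝ) ^ k) ^ r) := by
              rw [Finset.sum_const, Finset.card_univ, Fintype.card_prod, Fintype.card_fin,
                nsmul_eq_mul]
              push_cast
              ring
      -- numeric contradiction
      have hexp3 : (N:ℝ) ^ 3 < Real.exp ((r:ℝ)/32) := by
        have h3 : Real.exp (3 * Real.log N) = (N:ℝ) ^ 3 := by
          rw [show (3:ℝ) * Real.log N = ((3:ℕ):ℝ) * Real.log N by norm_num,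
            Real.exp_nat_mul, Real.exp_log hN0]
        rw [← h3]
        exact Real.exp_lt_exp.mpr (by linarith)
      have hexpneg : Real.exp (-(r:ℝ)/32) < ((N:ℝ) ^ 3)⁻¹ := by
        rw [show -(r:ℝ)/32 = -((r:ℝ)/32) by ring, Real.exp_neg]
        exact inv_strictAnti₀ (by positivity) hexp3
      have hP : (0:ℝ) < ((2:ℝ) ^ k) ^ r := by positivity
      rw [hcardΩ] at hle2
      have hfinal : ((2:ℝ) ^ k) ^ r < ((2:ℝ) ^ k) ^ r := by
        calc ((2:ℝ) ^ k) ^ r ≤ (N:ℝ) * (N:ℝ) * (2 * Real.exp (-(r:ℝ)/32) * ((2:ℝ) ^ k) ^ r) := hle2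
          _ < (N:ℝ) * (N:ℝ) * (2 * ((N:ℝ) ^ 3)⁻¹ * ((2:ℝ) ^ k) ^ r) := by
              apply mul_lt_mul_of_pos_left _ (by positivity)
              apply mul_lt_mul_of_pos_right _ hP
              linarith [hexpneg]
          _ = (2 / (N:ℝ)) * ((2:ℝ) ^ k) ^ r := by
              field_simp
          _ ≤ 1 * ((2:ℝ) ^ k) ^ r := by
              apply mul_le_mul_of_nonneg_right _ (le_of_lt hP)
              rw [div_le_one hN0]
              exact_mod_cast hN
          _ = ((2:ℝ) ^ k) ^ r := one_mul _
      exact absurd hfinal (lt_irrefl _)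
    obtain ⟨ω, hω⟩ := key
    refine ⟨fun l i => sg (ω l i), ?_, ?_⟩
    · intro l i
      cases h : ω l i
      · right; simp [sg, h]
      · left; simp [sg, h]
    · intro u v
      have hmv : ∀ l, Matrix.mulVec (fun l i => sg (ω l i)) (a u) l
          - Matrix.mulVec (fun l i => sg (ω l i)) (a v) l
          = ∑ i, sg (ω l i) * (a u i - a v i) := by
        intro l
        simp only [Matrix.mulVec, dotProduct, ← Finset.sum_sub_distrib, mul_sub]
      have hsum : ∑ l, (Matrix.mulVec (fun l i => sg (ω l i)) (a u) l
            - Matrix.mulVec (fun l i => sg (ω l i)) (a v) l) ^ 2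
          = ∑ l, (∑ i, sg (ω l i) * (a u i - a v i)) ^ 2 :=
        Finset.sum_congr rfl (fun l _ => by rw [hmv l])
      have h := hω u v
      simp only at h
      constructor
      · rw [hsum]; exact h.1
      · rw [hsum]; exact h.2
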